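/- Let V be a simple module over 𝒯_d such that W_i V = 0 for all i > t (t ∈ ℕ). Then G_{i−1/2}V = 0 for all i > t. -/

import Mathlib

namespace Stmt14Aux

open Submodule

variable {V : Type*} [AddCommGroup V] [Module ℂ V]

/-- evaluation at a vector, as a linear map -/
def evalAt (v : V) : Module.End ℂ V →ₗ[ℂ] V where
  toFun z := z v
  map_add' := by intros; rfl
  map_smul' := by intros; rfl

@[simp] lemma evalAt_apply (v : V) (z : Module.End ℂ V) : evalAt v z = z v := rfl

lemma span_map {M N : Type*} [AddCommGroup M] [Module ℂ M] [AddCommGroup N] [Module ℂ N]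
    (f : M →ₗ[ℂ] N) {S : Set M} {S' : Set N}
    (h : ∀ z ∈ S, f z ∈ span ℂ S') {w : M} (hw : w ∈ span ℂ S) : f w ∈ span ℂ S' := by
  induction hw using Submodule.span_induction with
  | mem x hx => exact h x hx
  | zero => rw [map_zero]; exact zero_mem _
  | add x y hx hy ihx ihy => rw [map_add]; exact add_mem ihx ihy
  | smul a x hx ih => rw [map_smul]; exact smul_mem _ _ ih

/-- product of odd operators along a list of indices -/
def Gp (EG : ℤ → Module.End ℂ V) : List ℤ → Module.End ℂ V
  | [] => 1
  | j :: l => EG j * Gp EG l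

@[simp] lemma Gp_nil (EG : ℤ → Module.End ℂ V) : Gp EG [] = 1 := rfl
@[simp] lemma Gp_cons (EG : ℤ → Module.End ℂ V) (j : ℤ) (l : List ℤ) :
    Gp EG (j :: l) = EG j * Gp EG l := rfl

/-- words in the operators with total `L`-raising capacity at most `r` -/
inductive Cap (d : ℕ) (EL EW EG : ℤ → Module.End ℂ V) (EC1 EC2 : Module.End ℂ V) :
    ℤ → Module.End ℂ V → Prop
  | unit (r : ℤ) (hr : 0 ≤ r) : Cap d EL EW EG EC1 EC2 r 1
  | mulL {r : ℤ} {x : Module.End ℂ V} (m : ℤ) (hm : 0 ≤ m)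
      (h : Cap d EL EW EG EC1 EC2 r x) : Cap d EL EW EG EC1 EC2 (r + m) (EL m * x)
  | mulW {r : ℤ} {x : Module.End ℂ V} (n : ℤ) (hn : -(d : ℤ) ≤ n)
      (h : Cap d EL EW EG EC1 EC2 r x) : Cap d EL EW EG EC1 EC2 r (EW n * x)
  | mulG {r : ℤ} {x : Module.End ℂ V} (n : ℤ) (hn : 1 ≤ n)
      (h : Cap d EL EW EG EC1 EC2 r x) : Cap d EL EW EG EC1 EC2 r (EG n * x)
  | mulC1 {r : ℤ} {x : Module.End ℂ V} (h : Cap d EL EW EG EC1 EC2 r x) :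
      Cap d EL EW EG EC1 EC2 r (EC1 * x)
  | mulC2 {r : ℤ} {x : Module.End ℂ V} (h : Cap d EL EW EG EC1 EC2 r x) :
      Cap d EL EW EG EC1 EC2 r (EC2 * x)

variable {d t : ℕ} {EL EW EG : ℤ → Module.End ℂ V} {EC1 EC2 : Module.End ℂ V}

lemma cap_nonneg {r x} (h : Cap d EL EW EG EC1 EC2 r x) : 0 ≤ r := by
  induction h with
  | unit r hr => exact hr
  | mulL m hm h ih => linarith
  | mulW n hn h ih => exact ih
  | mulG n hn h ih => exact ih
  | mulC1 h ih => exact ih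
  | mulC2 h ih => exact ih

lemma cap_mono {r r' x} (h : Cap d EL EW EG EC1 EC2 r x) (hr : r ≤ r') :
    Cap d EL EW EG EC1 EC2 r' x := by
  induction h generalizing r' with
  | unit r hr0 => exact Cap.unit r' (le_trans hr0 hr)
  | mulL m hm h ih =>
      have : r' = (r' - m) + m := by ring
      rw [this]
      exact Cap.mulL m hm (ih (by linarith))
  | mulW n hn h ih => exact Cap.mulW n hn (ih hr)
  | mulG n hn h ih => exact Cap.mulG n hn (ih hr)
  | mulC1 h ih => exact Cap.mulC1 (ih hr)
  | mulC2 h ih => exact Cap.mulC2 (ih hr)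

section Brackets

variable (hGG : ∀ m n : ℤ, 1 ≤ m → 1 ≤ n → EG m * EG n + EG n * EG m
      = ((m : ℂ) + n - 1) • EW (m + n - 1)
        + (if m + n - 1 = 0 then (1 : ℂ) else 0) • EC2)
variable (hWt : ∀ i : ℤ, (t : ℤ) < i → ∀ v : V, EW i v = 0)

include hWt in
lemma ew_zero (i : ℤ) (hi : (t : ℤ) < i) : EW i = 0 := by
  ext v; simpa using hWt i hi v

include hGG hWt in
lemma gg_anti (n j : ℤ) (hn : 1 ≤ n) (hj : (t : ℤ) < j) :
    EG n * EG j = -(EG j * EG n) := by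
  have h := hGG n j hn (by omega)
  rw [ew_zero hWt (n + j - 1) (by omega), if_neg (by omega)] at h
  simp only [smul_zero, zero_smul, add_zero] at h
  exact eq_neg_of_add_eq_zero_left h

include hGG hWt in
lemma gg_sq (j : ℤ) (hj : (t : ℤ) < j) : EG j * EG j = 0 := by
  have h := gg_anti hGG hWt j j (by omega) hj
  have h2 : (2 : ℂ) • (EG j * EG j) = 0 := by
    rw [two_smul]
    nth_rewrite 1 [h]
    exact neg_add_cancel _
  rcases smul_eq_zero.mp h2 with h3 | h3
  · exact absurd h3 two_ne_zero
  · exact h3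

include hGG hWt in
lemma g_pull (l : List ℤ) (hl : ∀ b ∈ l, (t : ℤ) < b) (n : ℤ) (hn : 1 ≤ n) :
    EG n * Gp EG l = ((-1 : ℂ)) ^ l.length • (Gp EG l * EG n) := by
  induction l with
  | nil => simp
  | cons j l ih =>
      have hj := hl j (List.mem_cons_self)
      have hl' : ∀ b ∈ l, (t : ℤ) < b := fun b hb => hl b (List.mem_cons_of_mem j hb)
      calc EG n * Gp EG (j :: l) = (EG n * EG j) * Gp EG l := by
              simp [mul_assoc]
        _ = -(EG j * (EG n * Gp EG l)) := by
              rw [gg_anti hGG hWt n j hn hj]; simp [mul_assoc]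
        _ = -(EG j * (((-1 : ℂ)) ^ l.length • (Gp EG l * EG n))) := by rw [ih hl']
        _ = ((-1 : ℂ)) ^ ((j :: l).length) • (Gp EG (j :: l) * EG n) := by
              rw [mul_smul_comm, List.length_cons, pow_succ]
              simp [mul_assoc, mul_smul, neg_one_smul]

include hGG hWt in
lemma gp_mem_zero (l : List ℤ) (hl : ∀ b ∈ l, (t : ℤ) < b) (j : ℤ) (hj : j ∈ l) :
    EG j * Gp EG l = 0 := by
  induction l with
  | nil => exact absurd hj (List.not_mem_nil)
  | cons b l ih =>
      have hb := hl b (List.mem_cons_self)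
      have hl' : ∀ c ∈ l, (t : ℤ) < c := fun c hc => hl c (List.mem_cons_of_mem b hc)
      rcases List.mem_cons.mp hj with h | h
      · subst h
        calc EG j * Gp EG (j :: l) = (EG j * EG j) * Gp EG l := by simp [mul_assoc]
          _ = 0 := by rw [gg_sq hGG hWt j hb, zero_mul]
      · have hjgt : (t : ℤ) < j := hl' j h
        calc EG j * Gp EG (b :: l) = (EG j * EG b) * Gp EG l := by simp [mul_assoc]
          _ = -(EG b * (EG j * Gp EG l)) := by
              rw [gg_anti hGG hWt j b (by omega) hb]; simp [mul_assoc]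
          _ = 0 := by rw [ih hl' h, mul_zero, neg_zero]

include hGG hWt in
lemma gp_dup (l : List ℤ) (hl : ∀ b ∈ l, (t : ℤ) < b) (hnd : ¬ l.Nodup) :
    Gp EG l = 0 := by
  induction l with
  | nil => exact absurd List.nodup_nil hnd
  | cons j l ih =>
      have hl' : ∀ c ∈ l, (t : ℤ) < c := fun c hc => hl c (List.mem_cons_of_mem j hc)
      by_cases hj : j ∈ l
      · simpa using gp_mem_zero hGG hWt l hl' j hj
      · have : ¬ l.Nodup := by
          intro hnodup
          exact hnd (List.nodup_cons.mpr ⟨hj, hnodup⟩)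
        simp [ih hl' this]

end Brackets

/-- generating set at the operator level: a product of `k` high `G`'s with index
sum at most `s`, times anything. -/
def GSet (EG : ℤ → Module.End ℂ V) (t : ℕ) (k : ℕ) (s : ℤ) : Set (Module.End ℂ V) :=
  {z | ∃ l : List ℤ, ∃ y : Module.End ℂ V,
      (∀ b ∈ l, (t : ℤ) < b) ∧ l.length = k ∧ l.sum ≤ s ∧ z = Gp EG l * y}

/-- generating set at the vector level -/
def VSet (EG : ℤ → Module.End ℂ V) (t : ℕ) (k : ℕ) (s : ℤ) : Set V :=
  {w | ∃ l : List ℤ, ∃ z : V,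
      (∀ b ∈ l, (t : ℤ) < b) ∧ l.length = k ∧ l.sum ≤ s ∧ w = Gp EG l z}

lemma gset_mono {k : ℕ} {s s' : ℤ} (h : s ≤ s') :
    span ℂ (GSet EG t k s) ≤ span ℂ (GSet EG t k s') :=
  span_mono (fun z ⟨l, y, h1, h2, h3, h4⟩ => ⟨l, y, h1, h2, le_trans h3 h, h4⟩)

lemma vset_mono {k : ℕ} {s s' : ℤ} (h : s ≤ s') :
    span ℂ (VSet EG t k s) ≤ span ℂ (VSet EG t k s') :=
  span_mono (fun z ⟨l, y, h1, h2, h3, h4⟩ => ⟨l, y, h1, h2, le_trans h3 h, h4⟩)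

lemma eval_gset {k : ℕ} {s : ℤ} {z : Module.End ℂ V} (hz : z ∈ span ℂ (GSet EG t k s))
    (w : V) : z w ∈ span ℂ (VSet EG t k s) := by
  have := span_map (evalAt w) (S := GSet EG t k s) (S' := VSet EG t k s) ?_ hz
  · simpa using this
  · rintro _ ⟨l, y, h1, h2, h3, rfl⟩
    apply subset_span
    exact ⟨l, y w, h1, h2, h3, by simp [Module.End.mul_apply]⟩

section Moves

variable (hLG : ∀ m n : ℤ, 0 ≤ m → 1 ≤ n → EL m * EG n - EG n * EL m
      = ((n : ℂ) - 1/2) • EG (m + n))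
variable (hGG : ∀ m n : ℤ, 1 ≤ m → 1 ≤ n → EG m * EG n + EG n * EG m
      = ((m : ℂ) + n - 1) • EW (m + n - 1)
        + (if m + n - 1 = 0 then (1 : ℂ) else 0) • EC2)
variable (hWG : ∀ m n : ℤ, -(d : ℤ) ≤ m → 1 ≤ n → EW m * EG n = EG n * EW m)
variable (hcent : ∀ m : ℤ, Commute EC1 (EL m) ∧ Commute EC1 (EW m) ∧ Commute EC1 (EG m)
      ∧ Commute EC2 (EL m) ∧ Commute EC2 (EW m) ∧ Commute EC2 (EG m)
      ∧ Commute EC1 EC2)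
variable (hWt : ∀ i : ℤ, (t : ℤ) < i → ∀ v : V, EW i v = 0)

include hLG in
lemma lg_comm (m j : ℤ) (hm : 0 ≤ m) (hj : 1 ≤ j) :
    EL m * EG j = EG j * EL m + ((j : ℂ) - 1/2) • EG (m + j) := by
  have h := hLG m j hm hj
  rw [sub_eq_iff_eq_add] at h
  rw [h, add_comm]

include hWG in
lemma move_W (n : ℤ) (hn : -(d : ℤ) ≤ n) (l : List ℤ) (hl : ∀ b ∈ l, (t : ℤ) < b) :
    EW n * Gp EG l = Gp EG l * EW n := by
  induction l with
  | nil => simp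
  | cons j l ih =>
      have hj := hl j (List.mem_cons_self)
      have hl' : ∀ b ∈ l, (t : ℤ) < b := fun b hb => hl b (List.mem_cons_of_mem j hb)
      calc EW n * Gp EG (j :: l) = (EW n * EG j) * Gp EG l := by simp [mul_assoc]
        _ = EG j * (EW n * Gp EG l) := by rw [hWG n j hn (by omega)]; rw [mul_assoc]
        _ = Gp EG (j :: l) * EW n := by rw [ih hl']; simp [mul_assoc]

include hcent in
lemma move_C1 (l : List ℤ) : EC1 * Gp EG l = Gp EG l * EC1 := by
  induction l with
  | nil => simp
  | cons j l ih =>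
      calc EC1 * Gp EG (j :: l) = (EC1 * EG j) * Gp EG l := by simp [mul_assoc]
        _ = EG j * (EC1 * Gp EG l) := by rw [(hcent j).2.2.1.eq, mul_assoc]
        _ = Gp EG (j :: l) * EC1 := by rw [ih]; simp [mul_assoc]

include hcent in
lemma move_C2 (l : List ℤ) : EC2 * Gp EG l = Gp EG l * EC2 := by
  induction l with
  | nil => simp
  | cons j l ih =>
      calc EC2 * Gp EG (j :: l) = (EC2 * EG j) * Gp EG l := by simp [mul_assoc]
        _ = EG j * (EC2 * Gp EG l) := by rw [(hcent j).2.2.2.2.2.1.eq, mul_assoc]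
        _ = Gp EG (j :: l) * EC2 := by rw [ih]; simp [mul_assoc]

include hLG in
lemma move_L (m : ℤ) (hm : 0 ≤ m) (l : List ℤ) (hl : ∀ b ∈ l, (t : ℤ) < b) :
    EL m * Gp EG l ∈ span ℂ (GSet EG t l.length (l.sum + m)) := by
  induction l with
  | nil =>
      apply subset_span
      exact ⟨[], EL m, by simp, rfl, by simpa using hm, by simp⟩
  | cons j l ih =>
      have hj := hl j (List.mem_cons_self)
      have hl' : ∀ b ∈ l, (t : ℤ) < b := fun b hb => hl b (List.mem_cons_of_mem j hb)
      have expand : EL m * Gp EG (j :: l)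
          = EG j * (EL m * Gp EG l) + ((j : ℂ) - 1/2) • (EG (m + j) * Gp EG l) := by
        calc EL m * Gp EG (j :: l) = (EL m * EG j) * Gp EG l := by simp [mul_assoc]
          _ = (EG j * EL m + ((j : ℂ) - 1/2) • EG (m + j)) * Gp EG l := by
              rw [lg_comm hLG m j hm (by omega)]
          _ = EG j * (EL m * Gp EG l) + ((j : ℂ) - 1/2) • (EG (m + j) * Gp EG l) := by
              rw [add_mul, smul_mul_assoc, mul_assoc]
      rw [expand]
      apply add_mem
      · have hmain := ih hl'
        have := span_map (LinearMap.mulLeft ℂ (EG j))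
          (S := GSet EG t l.length (l.sum + m))
          (S' := GSet EG t (j :: l).length ((j :: l).sum + m)) ?_ hmain
        · simpa using this
        · rintro _ ⟨l', y, h1, h2, h3, rfl⟩
          apply subset_span
          refine ⟨j :: l', y, ?_, by simp [h2], ?_, ?_⟩
          · intro b hb
            rcases List.mem_cons.mp hb with h | h
            · subst h; exact hj
            · exact h1 b h
          · simp only [List.sum_cons]; linarith
          · simp [LinearMap.mulLeft_apply, mul_assoc]
      · apply smul_mem
        apply subset_span
        refine ⟨(m + j) :: l, 1, ?_, by simp, ?_, by simp⟩
        · intro b hb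
          rcases List.mem_cons.mp hb with h | h
          · subst h; omega
          · exact hl' b h
        · simp only [List.sum_cons]; linarith

include hLG hGG hWG hcent hWt in
lemma move_cap {r : ℤ} {x : Module.End ℂ V} (h : Cap d EL EW EG EC1 EC2 r x) :
    ∀ l : List ℤ, (∀ b ∈ l, (t : ℤ) < b) →
      x * Gp EG l ∈ span ℂ (GSet EG t l.length (l.sum + r)) := by
  induction h with
  | unit r hr =>
      intro l hl
      rw [one_mul]
      exact subset_span ⟨l, 1, hl, rfl, by linarith, by rw [mul_one]⟩
  | @mulL r0 x0 m hm h ih =>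
      intro l hl
      rw [mul_assoc]
      have hmain := ih l hl
      have := span_map (LinearMap.mulLeft ℂ (EL m))
        (S := GSet EG t l.length (l.sum + r0))
        (S' := GSet EG t l.length (l.sum + (r0 + m))) ?_ hmain
      · simpa using this
      · rintro _ ⟨l', y, h1, h2, h3, rfl⟩
        simp only [LinearMap.mulLeft_apply]
        rw [← mul_assoc]
        have h4 := move_L hLG m hm l' h1
        have := span_map (LinearMap.mulRight ℂ y)
          (S := GSet EG t l'.length (l'.sum + m))
          (S' := GSet EG t l.length (l.sum + (r0 + m))) ?_ h4
        · simpa using this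
        · rintro _ ⟨l'', y'', g1, g2, g3, rfl⟩
          apply subset_span
          refine ⟨l'', y'' * y, g1, by rw [g2, h2], by linarith, ?_⟩
          simp [LinearMap.mulRight_apply, mul_assoc]
  | @mulW r0 x0 n hn h ih =>
      intro l hl
      rw [mul_assoc]
      have hmain := ih l hl
      have := span_map (LinearMap.mulLeft ℂ (EW n))
        (S := GSet EG t l.length (l.sum + r0))
        (S' := GSet EG t l.length (l.sum + r0)) ?_ hmain
      · simpa using this
      · rintro _ ⟨l', y, h1, h2, h3, rfl⟩
        apply subset_span
        refine ⟨l', EW n * y, h1, h2, h3, ?_⟩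
        simp only [LinearMap.mulLeft_apply]
        rw [← mul_assoc, move_W hWG n hn l' h1, mul_assoc]
  | @mulG r0 x0 n hn h ih =>
      intro l hl
      rw [mul_assoc]
      have hmain := ih l hl
      have := span_map (LinearMap.mulLeft ℂ (EG n))
        (S := GSet EG t l.length (l.sum + r0))
        (S' := GSet EG t l.length (l.sum + r0)) ?_ hmain
      · simpa using this
      · rintro _ ⟨l', y, h1, h2, h3, rfl⟩
        simp only [LinearMap.mulLeft_apply]
        rw [← mul_assoc, g_pull hGG hWt l' h1 n hn, smul_mul_assoc, mul_assoc]
        apply smul_mem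
        exact subset_span ⟨l', EG n * y, h1, h2, h3, rfl⟩
  | @mulC1 r0 x0 h ih =>
      intro l hl
      rw [mul_assoc]
      have hmain := ih l hl
      have := span_map (LinearMap.mulLeft ℂ EC1)
        (S := GSet EG t l.length (l.sum + r0))
        (S' := GSet EG t l.length (l.sum + r0)) ?_ hmain
      · simpa using this
      · rintro _ ⟨l', y, h1, h2, h3, rfl⟩
        apply subset_span
        refine ⟨l', EC1 * y, h1, h2, h3, ?_⟩
        simp only [LinearMap.mulLeft_apply]
        rw [← mul_assoc, move_C1 hcent l', mul_assoc]
  | @mulC2 r0 x0 h ih =>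
      intro l hl
      rw [mul_assoc]
      have hmain := ih l hl
      have := span_map (LinearMap.mulLeft ℂ EC2)
        (S := GSet EG t l.length (l.sum + r0))
        (S' := GSet EG t l.length (l.sum + r0)) ?_ hmain
      · simpa using this
      · rintro _ ⟨l', y, h1, h2, h3, rfl⟩
        apply subset_span
        refine ⟨l', EC2 * y, h1, h2, h3, ?_⟩
        simp only [LinearMap.mulLeft_apply]
        rw [← mul_assoc, move_C2 hcent l', mul_assoc]

end Moves

/-- sum of `n` distinct integers all `≥ c` is at least `n*c + n(n-1)/2` (doubled form) -/
lemma finset_sum_lower : ∀ (n : ℕ) (S : Finset ℤ) (c : ℤ), S.card = n →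
    (∀ b ∈ S, c ≤ b) → 2 * c * n + n * ((n : ℤ) - 1) ≤ 2 * ∑ b ∈ S, b := by
  intro n
  induction n with
  | zero =>
      intro S c h0 _
      rw [Finset.card_eq_zero.mp h0]
      simp
  | succ n ih =>
      intro S c hc hb
      have hne : S.Nonempty := Finset.card_pos.mp (by omega)
      set M := S.max' hne with hMdef
      have hMm : M ∈ S := S.max'_mem hne
      have hsub : S ⊆ Finset.Icc c M :=
        fun b hb' => Finset.mem_Icc.mpr ⟨hb b hb', S.le_max' b hb'⟩
      have hcard := Finset.card_le_card hsub
      rw [Int.card_Icc, hc] at hcard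
      have hMc : (n : ℤ) + c ≤ M := by omega
      have hrec := ih (S.erase M) c
        (by rw [Finset.card_erase_of_mem hMm, hc]; rfl)
        (fun b hb' => hb b (Finset.erase_subset M S hb'))
      have hsplit : M + ∑ b ∈ S.erase M, b = ∑ b ∈ S, b :=
        Finset.add_sum_erase S (fun b => b) hMm
      push_cast
      push_cast at hrec
      linarith

lemma list_sum_lower (l : List ℤ) (hnd : l.Nodup) (c : ℤ) (hb : ∀ b ∈ l, c ≤ b) :
    2 * c * l.length + l.length * ((l.length : ℤ) - 1) ≤ 2 * l.sum := by
  have hcard : l.toFinset.card = l.length := List.toFinset_card_of_nodup hnd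
  have hsum : ∑ b ∈ l.toFinset, b = l.sum := by
    have := List.sum_toFinset (fun b : ℤ => b) hnd
    simpa using this
  rw [← hsum]
  exact finset_sum_lower l.length l.toFinset c hcard
    (fun b hb' => hb b (List.mem_toFinset.mp hb'))

end Stmt14Aux

open Stmt14Aux Submodule

/-- Let `V` be a simple module over the subalgebra `𝒯_d` of `𝒮` (operators as in the
bracket relations below; `EG n` acts as `G_{n-1/2}`), with `W_i V = 0` for all `i > t`.
Then `G_{i-1/2} V = 0` for all `i > t`. -/
theorem stmt14
    (V : Type*) [AddCommGroup V] [Module ℂ V] (d t : ℕ)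
    (EL EW EG : ℤ → Module.End ℂ V) (EC1 EC2 : Module.End ℂ V)
    (hLL : ∀ m n : ℤ, 0 ≤ m → 0 ≤ n → EL m * EL n - EL n * EL m
      = ((n : ℂ) - m) • EL (m + n)
        + ((((m : ℂ) ^ 3 - m) / 12) * (if m + n = 0 then 1 else 0)) • EC1)
    (hLW : ∀ m n : ℤ, 0 ≤ m → -(d : ℤ) ≤ n → EL m * EW n - EW n * EL m
      = ((m : ℂ) + n) • EW (m + n) + (if m + n = 0 then (1 : ℂ) else 0) • EC2)
    (hLG : ∀ m n : ℤ, 0 ≤ m → 1 ≤ n → EL m * EG n - EG n * EL m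
      = ((n : ℂ) - 1/2) • EG (m + n))
    (hGG : ∀ m n : ℤ, 1 ≤ m → 1 ≤ n → EG m * EG n + EG n * EG m
      = ((m : ℂ) + n - 1) • EW (m + n - 1)
        + (if m + n - 1 = 0 then (1 : ℂ) else 0) • EC2)
    (hWW : ∀ m n : ℤ, -(d : ℤ) ≤ m → -(d : ℤ) ≤ n → EW m * EW n = EW n * EW m)
    (hWG : ∀ m n : ℤ, -(d : ℤ) ≤ m → 1 ≤ n → EW m * EG n = EG n * EW m)
    (hcent : ∀ m : ℤ, Commute EC1 (EL m) ∧ Commute EC1 (EW m) ∧ Commute EC1 (EG m)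
      ∧ Commute EC2 (EL m) ∧ Commute EC2 (EW m) ∧ Commute EC2 (EG m)
      ∧ Commute EC1 EC2)
    (hWt : ∀ i : ℤ, (t : ℤ) < i → ∀ v : V, EW i v = 0)
    (hnt : Nontrivial V)
    (hsimple : ∀ U : Submodule ℂ V,
      ((∀ m : ℤ, 0 ≤ m → ∀ u ∈ U, EL m u ∈ U) ∧
       (∀ n : ℤ, -(d : ℤ) ≤ n → ∀ u ∈ U, EW n u ∈ U) ∧
       (∀ j : ℤ, 1 ≤ j → ∀ u ∈ U, EG j u ∈ U) ∧
       (∀ u ∈ U, EC1 u ∈ U) ∧ (∀ u ∈ U, EC2 u ∈ U)) → U = ⊥ ∨ U = ⊤) :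
    ∀ i : ℤ, (t : ℤ) < i → ∀ v : V, EG i v = 0 := by
  intro i hi v
  by_contra hu
  set u : V := EG i v with hudef
  -- the cyclic submodule generated by u
  set SS : Set V := {w | ∃ r : ℤ, ∃ x : Module.End ℂ V,
      Cap d EL EW EG EC1 EC2 r x ∧ w = x u} with hSSdef
  have hclosure : ∀ (f : Module.End ℂ V),
      (∀ r x, Cap d EL EW EG EC1 EC2 r x →
        ∃ r', Cap d EL EW EG EC1 EC2 r' (f * x)) →
      ∀ w ∈ span ℂ SS, f w ∈ span ℂ SS := by
    intro f hf w hw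
    refine span_map (f : Module.End ℂ V) ?_ hw
    rintro z ⟨r, x, hx, rfl⟩
    obtain ⟨r', hr'⟩ := hf r x hx
    apply subset_span
    exact ⟨r', f * x, hr', by rw [Module.End.mul_apply]⟩
  set Msub : Submodule ℂ V := span ℂ SS with hMdef
  have hM := hsimple Msub ⟨
    fun m hm w hw => hclosure (EL m) (fun r x hx => ⟨r + m, Cap.mulL m hm hx⟩) w hw,
    fun n hn w hw => hclosure (EW n) (fun r x hx => ⟨r, Cap.mulW n hn hx⟩) w hw,
    fun j hj w hw => hclosure (EG j) (fun r x hx => ⟨r, Cap.mulG j hj hx⟩) w hw,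
    fun w hw => hclosure EC1 (fun r x hx => ⟨r, Cap.mulC1 hx⟩) w hw,
    fun w hw => hclosure EC2 (fun r x hx => ⟨r, Cap.mulC2 hx⟩) w hw⟩
  have huM : u ∈ Msub :=
    subset_span ⟨0, 1, Cap.unit 0 le_rfl, (Module.End.one_apply u).symm⟩
  rcases hM with hbot | htop
  · rw [hbot] at huM
    exact hu (mem_bot ℂ |>.mp huM)
  -- v is in the cyclic module
  have hvM : v ∈ span ℂ SS := by
    rw [← hMdef, htop]; exact mem_top
  rw [mem_span_set'] at hvM
  obtain ⟨n, f, gfun, hsum⟩ := hvM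
  have hx : ∀ β : Fin n, ∃ rx : ℤ × Module.End ℂ V,
      Cap d EL EW EG EC1 EC2 rx.1 rx.2 ∧ (gfun β : V) = rx.2 u := by
    intro β
    obtain ⟨r, x, hx, hval⟩ := (gfun β).2
    exact ⟨(r, x), hx, hval⟩
  choose rx hcap hval using hx
  set R : ℤ := ∑ β : Fin n, (rx β).1 with hRdef
  have hRnonneg : 0 ≤ R := Finset.sum_nonneg (fun β _ => cap_nonneg (hcap β))
  have hcapR : ∀ β : Fin n, Cap d EL EW EG EC1 EC2 R ((rx β).2) := by
    intro β
    exact cap_mono (hcap β)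
      (Finset.single_le_sum (fun γ _ => cap_nonneg (hcap γ)) (Finset.mem_univ β))
  have hrep : v = ∑ β : Fin n, f β • ((rx β).2 u) := by
    rw [← hsum]
    congr 1
    ext β
    rw [hval β]
  -- u as a G-product applied to v
  have hGpi : ∀ w : V, Gp EG [i] w = EG i w := by
    intro w; simp [Gp]
  -- key induction
  have key : ∀ k : ℕ, v ∈ span ℂ (VSet EG t (k + 1) (((k : ℤ) + 1) * ((i : ℤ) + R))) := by
    intro k
    induction k with
    | zero =>
        rw [hrep]
        apply Submodule.sum_mem
        intro β _
        apply Submodule.smul_mem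
        have hop := move_cap hLG hGG hWG hcent hWt (hcapR β) [i]
          (by intro b hb; simp at hb; omega)
        have hsum1 : ([i] : List ℤ).sum = i := by simp
        rw [hsum1] at hop
        have heval := eval_gset hop v
        have happ : ((rx β).2 * Gp EG [i]) v = (rx β).2 u := by
          rw [Module.End.mul_apply, hGpi, hudef]
        rw [happ] at heval
        refine vset_mono ?_ (by simpa using heval)
        push_cast; nlinarith [hRnonneg, hi]
    | succ k ihk =>
        -- EG i v lands in length k+2 products
        have h1 : u ∈ span ℂ (VSet EG t (k + 2)
            ((i : ℤ) + ((k : ℤ) + 1) * ((i : ℤ) + R))) := by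
          rw [hudef]
          have := span_map (EG i : Module.End ℂ V)
            (S := VSet EG t (k + 1) (((k : ℤ) + 1) * ((i : ℤ) + R)))
            (S' := VSet EG t (k + 2) ((i : ℤ) + ((k : ℤ) + 1) * ((i : ℤ) + R))) ?_ ihk
          · exact this
          · rintro _ ⟨l, z, g1, g2, g3, rfl⟩
            apply subset_span
            refine ⟨i :: l, z, ?_, by simp [g2], ?_, ?_⟩
            · intro b hb
              rcases List.mem_cons.mp hb with h | h
              · subst h; exact hi
              · exact g1 b h
            · simp only [List.sum_cons]; linarith
            · simp [Gp, Module.End.mul_apply]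
        -- apply each word
        have h2 : ∀ β : Fin n, (rx β).2 u ∈ span ℂ
            (VSet EG t (k + 2) (((k : ℤ) + 2) * ((i : ℤ) + R))) := by
          intro β
          have := span_map ((rx β).2 : Module.End ℂ V)
            (S := VSet EG t (k + 2) ((i : ℤ) + ((k : ℤ) + 1) * ((i : ℤ) + R)))
            (S' := VSet EG t (k + 2) (((k : ℤ) + 2) * ((i : ℤ) + R))) ?_ h1
          · exact this
          · rintro _ ⟨l, z, g1, g2, g3, rfl⟩
            have hop := move_cap hLG hGG hWG hcent hWt (hcapR β) l g1
            have heval := eval_gset hop z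
            have happ : ((rx β).2 * Gp EG l) z = (rx β).2 (Gp EG l z) := by
              rw [Module.End.mul_apply]
            rw [happ] at heval
            rw [g2] at heval
            refine vset_mono ?_ heval
            have hring : ((k : ℤ) + 2) * ((i : ℤ) + R)
                = ((i : ℤ) + R) + ((k : ℤ) + 1) * ((i : ℤ) + R) := by ring
            rw [hring]; linarith
        have : v ∈ span ℂ (VSet EG t (k + 2) (((k : ℤ) + 2) * ((i : ℤ) + R))) := by
          rw [hrep]
          apply Submodule.sum_mem
          intro β _
          exact Submodule.smul_mem _ _ (h2 β)
        have hceq : ((k + 1 : ℕ) : ℤ) + 1 = (k : ℤ) + 2 := by push_cast; ring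
        rw [hceq]
        exact this
  -- choose k large enough
  set k1 : ℕ := (2 * ((i : ℤ) + R - (t : ℤ))).toNat + 1 with hk1def
  have hk1pos : (0 : ℤ) ≤ 2 * ((i : ℤ) + R - (t : ℤ)) := by omega
  have hk1 : ((k1 : ℤ) + 1) = 2 * ((i : ℤ) + R - (t : ℤ)) + 2 := by
    rw [hk1def]
    push_cast [Int.toNat_of_nonneg hk1pos]
    ring
  have hfinal := key k1
  have hzero : ∀ w ∈ VSet EG t (k1 + 1) (((k1 : ℤ) + 1) * ((i : ℤ) + R)), w = (0 : V) := by
    rintro w ⟨l, z, g1, g2, g3, rfl⟩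
    by_cases hnd : l.Nodup
    · exfalso
      have hbound := list_sum_lower l hnd ((t : ℤ) + 1) (fun b hb => by
        have := g1 b hb; omega)
      rw [g2] at hbound
      have hlen : ((k1 + 1 : ℕ) : ℤ) = (k1 : ℤ) + 1 := by push_cast; ring
      rw [hlen, hk1] at hbound
      rw [hk1] at g3
      nlinarith [hk1pos, g3, hbound]
    · rw [gp_dup hGG hWt l g1 hnd]
      simp
  have hle : span ℂ (VSet EG t (k1 + 1) (((k1 : ℤ) + 1) * ((i : ℤ) + R)))
      ≤ (⊥ : Submodule ℂ V) := by
    rw [span_le]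
    intro w hw
    rw [hzero w hw]
    exact (⊥ : Submodule ℂ V).zero_mem
  have hv0 : v = 0 := (mem_bot ℂ).mp (hle hfinal)
  exact hu (by rw [hudef, hv0]; exact map_zero _)
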